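/- Let $S = K[x_1,\ldots,x_n]$ with $n \ge 1$ and let $I \subset S$ be an $\mathfrak{m}$-primary stable monomial ideal, where $\mathfrak{m} = (x_1,\ldots,x_n)$. If some linear form $l \in S_1$ is a weak Lefschetz element on $S/I$ (i.e., multiplication by $l$ from $(S/I)_j$ to $(S/I)_{j+1}$ has maximal rank for all $j$), then $x_n$ is a weak Lefschetz element on $S/I$. -/

import Mathlib

open MvPolynomial

variable {K : Type*} [Field K] {n : ℕ}

/-- The total degree of an exponent vector. -/
def mdeg {n : ℕ} (m : Fin n →₀ ℕ) : ℕ := m.sum fun _ e => e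

/-- `I` is a monomial ideal: it contains every monomial of each of its elements. -/
def IsMonomialIdeal (I : Ideal (MvPolynomial (Fin n) K)) : Prop :=
  ∀ f ∈ I, ∀ m ∈ f.support, (monomial m (1 : K)) ∈ I

/-- `I` is stable: for every monomial `u ∈ I` with largest dividing variable `x_k`,
and every `i ≤ k`, the monomial `(x_i / x_k) * u` lies in `I`. -/
def IsStableIdeal (I : Ideal (MvPolynomial (Fin n) K)) : Prop :=
  ∀ m : Fin n →₀ ℕ, (monomial m (1 : K)) ∈ I →
    ∀ k i : Fin n, m k ≠ 0 → (∀ k', k < k' → m k' = 0) → i ≤ k →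
      (monomial (m + Finsupp.single i 1 - Finsupp.single k 1) (1 : K)) ∈ I

/-- `I` is strongly stable: for every monomial `u ∈ I`, every variable `x_k` dividing `u`
and every `i ≤ k`, the monomial `(x_i / x_k) * u` lies in `I`. -/
def IsStronglyStableIdeal (I : Ideal (MvPolynomial (Fin n) K)) : Prop :=
  ∀ m : Fin n →₀ ℕ, (monomial m (1 : K)) ∈ I →
    ∀ k i : Fin n, m k ≠ 0 → i ≤ k →
      (monomial (m + Finsupp.single i 1 - Finsupp.single k 1) (1 : K)) ∈ I

/-- `v <_lex u` for exponent vectors, lex order with `x_1 > x_2 > ⋯ > x_n`. -/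
def lexLt {n : ℕ} (v u : Fin n →₀ ℕ) : Prop :=
  ∃ i : Fin n, (∀ j < i, v j = u j) ∧ v i < u i

/-- `I` is a lexsegment ideal. -/
def IsLexsegmentIdeal (I : Ideal (MvPolynomial (Fin n) K)) : Prop :=
  IsMonomialIdeal I ∧
    ∀ u v : Fin n →₀ ℕ, (monomial u (1 : K)) ∈ I → mdeg v = mdeg u → lexLt u v →
      (monomial v (1 : K)) ∈ I

/-- The degree `j` piece of `S/I`, as the image of the degree `j` homogeneous polynomials. -/
noncomputable def Qpiece (I : Ideal (MvPolynomial (Fin n) K)) (j : ℕ) :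
    Submodule K (MvPolynomial (Fin n) K ⧸ I) :=
  (homogeneousSubmodule (Fin n) K j).map (Ideal.Quotient.mkₐ K I).toLinearMap

/-- Multiplication by `g` maps `(S/I)_j` injectively (to `(S/I)_{j'}`). -/
def QInj (I : Ideal (MvPolynomial (Fin n) K)) (g : MvPolynomial (Fin n) K)
    (j _j' : ℕ) : Prop :=
  ∀ f₁ ∈ Qpiece I j, ∀ f₂ ∈ Qpiece I j,
    Ideal.Quotient.mk I g * f₁ = Ideal.Quotient.mk I g * f₂ → f₁ = f₂

/-- Multiplication by `g` maps `(S/I)_j` onto `(S/I)_{j'}`. -/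
def QSurj (I : Ideal (MvPolynomial (Fin n) K)) (g : MvPolynomial (Fin n) K)
    (j j' : ℕ) : Prop :=
  ∀ h ∈ Qpiece I j', ∃ f ∈ Qpiece I j, Ideal.Quotient.mk I g * f = h

/-- Multiplication by `g` from `(S/I)_j` to `(S/I)_{j'}` has maximal rank. -/
def MulMaxRank (I : Ideal (MvPolynomial (Fin n) K)) (g : MvPolynomial (Fin n) K)
    (j j' : ℕ) : Prop :=
  QInj I g j j' ∨ QSurj I g j j'


section Aux

lemma degree_one_eq_single' {σ : Type*} (d : σ →₀ ℕ) (h : d.degree = 1) :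
    ∃ i, d = Finsupp.single i 1 := by
  have hne : d ≠ 0 := by
    intro h0; rw [h0, map_zero] at h; omega
  obtain ⟨i, hi⟩ : ∃ i, d i ≠ 0 := by
    by_contra hc; push_neg at hc; exact hne (Finsupp.ext fun a => hc a)
  refine ⟨i, Finsupp.ext fun a => ?_⟩
  classical
  have hle := Finsupp.le_degree i d
  rcases eq_or_ne a i with rfl | ha
  · simp only [Finsupp.single_eq_same]; omega
  · rw [Finsupp.single_eq_of_ne ha]
    by_contra hda
    have hsub : ({i, a} : Finset σ) ⊆ d.support := by
      intro x hx
      simp only [Finset.mem_insert, Finset.mem_singleton] at hx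
      rcases hx with rfl | rfl <;> simp [Finsupp.mem_support_iff, hi, hda]
    have : d i + d a ≤ d.degree := by
      have := Finset.sum_le_sum_of_subset (f := fun x => d x) hsub
      rwa [Finset.sum_pair (Ne.symm ha)] at this
    omega

lemma key_mem' (hn : 0 < n) (I : Ideal (MvPolynomial (Fin n) K))
    (hmon : IsMonomialIdeal I) (hst : IsStableIdeal I)
    (l : MvPolynomial (Fin n) K) (hl : l.IsHomogeneous 1)
    (F : MvPolynomial (Fin n) K)
    (hF : X (⟨n - 1, by omega⟩ : Fin n) * F ∈ I) : l * F ∈ I := by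
  set last : Fin n := ⟨n - 1, by omega⟩ with hlast
  have hstep : ∀ m ∈ F.support, ∀ i : Fin n,
      (monomial (m + Finsupp.single i 1) (1 : K)) ∈ I := by
    intro m hm i
    have h1 : (Finsupp.single last 1 + m) ∈ (X last * F).support := by
      rw [MvPolynomial.mem_support_iff] at hm ⊢
      rwa [coeff_X_mul]
    have h2 := hmon _ hF _ h1
    have h3 := hst _ h2 last i
      (by simp [Finsupp.add_apply, Finsupp.single_eq_same])
      (by
        intro k' hk'
        exact absurd hk' (by
          rw [Fin.lt_def]
          have := k'.isLt
          simp only [hlast]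
          omega))
      (by rw [Fin.le_def]; have := i.isLt; simp only [hlast]; omega)
    have heq : Finsupp.single last 1 + m + Finsupp.single i 1 - Finsupp.single last 1
        = m + Finsupp.single i 1 := by
      ext a
      simp only [Finsupp.coe_tsub, Pi.sub_apply, Finsupp.add_apply]
      omega
    rwa [heq] at h3
  rw [l.as_sum, F.as_sum, Finset.sum_mul_sum]
  apply Ideal.sum_mem
  intro d hd
  apply Ideal.sum_mem
  intro m hm
  rw [monomial_mul]
  obtain ⟨i, rfl⟩ : ∃ i, d = Finsupp.single i 1 := by
    apply degree_one_eq_single'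
    rw [Finsupp.degree_eq_weight_one]
    exact hl (MvPolynomial.mem_support_iff.mp hd)
  have hIm : (monomial (Finsupp.single i 1 + m) (1 : K)) ∈ I := by
    rw [add_comm]; exact hstep m hm i
  have h5 : (monomial (Finsupp.single i 1 + m) (coeff (Finsupp.single i 1) l * coeff m F)) =
      C (coeff (Finsupp.single i 1) l * coeff m F) *
        (monomial (Finsupp.single i 1 + m) (1 : K)) := by
    rw [C_mul_monomial, mul_one]
  rw [h5]
  exact Ideal.mul_mem_left _ _ hIm

end Aux

section MulMapAux

lemma mul_mem_Qpiece (I : Ideal (MvPolynomial (Fin n) K)) {g : MvPolynomial (Fin n) K}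
    (hg : g.IsHomogeneous 1) {j : ℕ} {x : MvPolynomial (Fin n) K ⧸ I}
    (hx : x ∈ Qpiece I j) : Ideal.Quotient.mk I g * x ∈ Qpiece I (j + 1) := by
  obtain ⟨F, hF, rfl⟩ := hx
  refine ⟨g * F, ?_, ?_⟩
  · have hF' : F.IsHomogeneous j := hF
    have h2 := hg.mul hF'
    show (g * F).IsHomogeneous (j + 1)
    rwa [add_comm] at h2
  · simp [Ideal.Quotient.mkₐ_eq_mk, map_mul]

noncomputable def mulMap (I : Ideal (MvPolynomial (Fin n) K)) {g : MvPolynomial (Fin n) K}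
    (hg : g.IsHomogeneous 1) (j : ℕ) : Qpiece I j →ₗ[K] Qpiece I (j + 1) :=
  LinearMap.restrict (LinearMap.mulLeft K (Ideal.Quotient.mk I g))
    (fun _ hx => mul_mem_Qpiece I hg hx)

lemma mulMap_apply (I : Ideal (MvPolynomial (Fin n) K)) {g : MvPolynomial (Fin n) K}
    (hg : g.IsHomogeneous 1) (j : ℕ) (x : Qpiece I j) :
    (mulMap I hg j x : MvPolynomial (Fin n) K ⧸ I) = Ideal.Quotient.mk I g * x := rfl

end MulMapAux

/-- For an `𝔪`-primary stable monomial ideal, if some linear form is a weak Lefschetz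
element on `S/I`, then `x_n` is a weak Lefschetz element on `S/I`. -/
theorem stmt_1 (hn : 1 ≤ n) (I : Ideal (MvPolynomial (Fin n) K))
    (hmon : IsMonomialIdeal I) (hst : IsStableIdeal I)
    (hfd : FiniteDimensional K (MvPolynomial (Fin n) K ⧸ I))
    (l : MvPolynomial (Fin n) K) (hl : l ∈ homogeneousSubmodule (Fin n) K 1)
    (hwl : ∀ j : ℕ, MulMaxRank I l j (j + 1)) :
    ∀ j : ℕ, MulMaxRank I (X (⟨n - 1, by omega⟩ : Fin n)) j (j + 1) := by
  intro j
  have hl' : l.IsHomogeneous 1 := hl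
  have hxn : (X (⟨n - 1, by omega⟩ : Fin n) : MvPolynomial (Fin n) K).IsHomogeneous 1 :=
    isHomogeneous_X _ _
  -- kernel inclusion
  have hker : ∀ v ∈ Qpiece I j,
      Ideal.Quotient.mk I (X (⟨n - 1, by omega⟩ : Fin n)) * v = 0 →
      Ideal.Quotient.mk I l * v = 0 := by
    intro v hv h0
    obtain ⟨F, hF, rfl⟩ := hv
    have hFI : X (⟨n - 1, by omega⟩ : Fin n) * F ∈ I := by
      rw [← Ideal.Quotient.eq_zero_iff_mem, map_mul]
      exact h0
    have hlF := key_mem' hn I hmon hst l hl' F hFI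
    rw [← Ideal.Quotient.eq_zero_iff_mem, map_mul] at hlF
    exact hlF
  rcases hwl j with hinj | hsurj
  · -- l injective ⟹ x_n injective
    left
    intro f₁ h₁ f₂ h₂ heq
    have hsub : f₁ - f₂ ∈ Qpiece I j := sub_mem h₁ h₂
    have h0 : Ideal.Quotient.mk I (X (⟨n - 1, by omega⟩ : Fin n)) * (f₁ - f₂) = 0 := by
      rw [mul_sub, heq, sub_self]
    have hl0 := hker _ hsub h0
    rw [mul_sub, sub_eq_zero] at hl0
    exact hinj f₁ h₁ f₂ h₂ hl0
  · -- l surjective ⟹ x_n surjective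
    right
    have φl := mulMap I hl' j
    set φL := mulMap I hl' j with hφL
    set φX := mulMap I hxn j with hφX
    have hsL : Function.Surjective φL := by
      rintro ⟨w, hw⟩
      obtain ⟨f, hf, hfw⟩ := hsurj w hw
      exact ⟨⟨f, hf⟩, Subtype.ext (by rw [hφL, mulMap_apply]; exact hfw)⟩
    have hkle : LinearMap.ker φX ≤ LinearMap.ker φL := by
      rintro ⟨v, hv⟩ h
      rw [LinearMap.mem_ker] at h ⊢
      have h0 : Ideal.Quotient.mk I (X (⟨n - 1, by omega⟩ : Fin n)) * v = 0 := by
        have := congrArg (Subtype.val) h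
        rwa [hφX, mulMap_apply] at this
      exact Subtype.ext (by rw [hφL, mulMap_apply]; exact hker v hv h0)
    have h1 := LinearMap.finrank_range_add_finrank_ker φL
    have h2 := LinearMap.finrank_range_add_finrank_ker φX
    have h3 : Module.finrank K (LinearMap.range φL) = Module.finrank K (Qpiece I (j + 1)) := by
      rw [LinearMap.range_eq_top.mpr hsL]
      exact finrank_top _ _
    have h4 : Module.finrank K (LinearMap.ker φX) ≤ Module.finrank K (LinearMap.ker φL) :=
      Submodule.finrank_mono hkle
    have h5 : Module.finrank K (LinearMap.range φX) ≤ Module.finrank K (Qpiece I (j + 1)) :=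
      (LinearMap.range φX).finrank_le
    have h6 : Module.finrank K (LinearMap.range φX) = Module.finrank K (Qpiece I (j + 1)) := by
      omega
    have htop : LinearMap.range φX = ⊤ := Submodule.eq_top_of_finrank_eq h6
    intro h hh
    have hmem : (⟨h, hh⟩ : Qpiece I (j + 1)) ∈ LinearMap.range φX := by
      rw [htop]; trivial
    obtain ⟨⟨f, hf⟩, hfx⟩ := hmem
    refine ⟨f, hf, ?_⟩
    have := congrArg Subtype.val hfx
    rwa [hφX, mulMap_apply] at this
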